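/- arXiv:1801.00823 — 2 statements merged into one kernel-verified Lean document; each statement's English description precedes it below -/
import Mathlib

section
/- For square real matrices A, B ∈ ℝ^{n×n} with nonincreasingly ordered singular values σ_i(A), σ_i(B), the von Neumann trace inequality holds: tr(A Bᵀ) ≤ ∑_{i=1}^{n} σ_i(A) σ_i(B). -/
open Matrix

noncomputable def frob {m n : Type*} [Fintype m] [Fintype n] (A : Matrix m n ℝ) : ℝ :=
  Real.sqrt (∑ i, ∑ j, (A i j)^2)

/-- The singular values of a real matrix `A`: square roots of the eigenvalues of `Aᵀ * A`. -/
noncomputable def singVals {m n : ℕ} (A : Matrix (Fin m) (Fin n) ℝ) : Fin n → ℝ :=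
  fun i => Real.sqrt ((show (Aᵀ * A).IsHermitian by simpa using Matrix.isHermitian_conjTranspose_mul_self A).eigenvalues i)

open Polynomial


variable {ι : Type*} [Fintype ι] [DecidableEq ι]

/-- multiset of values of a function on a fintype -/
def msetOf (f : ι → ℝ) : Multiset ℝ := Finset.univ.val.map f

lemma msetOf_comp_equiv {κ : Type*} [Fintype κ] [DecidableEq κ] (f : ι → ℝ) (e : κ ≃ ι) :
    msetOf (f ∘ e) = msetOf f := by
  unfold msetOf
  rw [← Multiset.map_map]
  congr 1
  have : Finset.univ.val.map (⇑e) = (Finset.univ.map e.toEmbedding).val := by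
    simp [Finset.map]
  rw [this]
  congr 1
  simp

lemma ds_core {d e : ι → ℝ} (hde : Monovary d e) {S : Matrix ι ι ℝ}
    (hS : S ∈ doublyStochastic ℝ ι) :
    ∑ i, ∑ j, d i * e j * S i j ≤ ∑ i, d i * e i := by
  obtain ⟨w, hw0, hw1, hwS⟩ := exists_eq_sum_perm_of_mem_doublyStochastic hS
  have hperm : ∀ σ : Equiv.Perm ι,
      ∑ i, ∑ j, d i * e j * (σ.permMatrix ℝ) i j = ∑ i, d i * e (σ i) := by
    intro σ
    refine Finset.sum_congr rfl fun i _ => ?_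
    rw [Finset.sum_eq_single (σ i)]
    · simp [Equiv.Perm.permMatrix, PEquiv.toMatrix_apply, Equiv.toPEquiv_apply]
    · intro j _ hj
      simp [Equiv.Perm.permMatrix, PEquiv.toMatrix_apply, Equiv.toPEquiv_apply, Ne.symm hj]
    · simp
  have hSij : ∀ i j, S i j = ∑ σ : Equiv.Perm ι, w σ * (σ.permMatrix ℝ) i j := by
    intro i j
    rw [← hwS]
    simp [Matrix.sum_apply]
  calc ∑ i, ∑ j, d i * e j * S i j
      = ∑ σ : Equiv.Perm ι, w σ * ∑ i, d i * e (σ i) := by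
        have h1 : ∀ i j, d i * e j * S i j
            = ∑ σ : Equiv.Perm ι, w σ * (d i * e j * (σ.permMatrix ℝ) i j) := by
          intro i j
          rw [hSij i j, Finset.mul_sum]
          refine Finset.sum_congr rfl fun σ _ => ?_
          ring
        simp_rw [h1]
        calc ∑ i, ∑ j, ∑ σ : Equiv.Perm ι, w σ * (d i * e j * (σ.permMatrix ℝ) i j)
            = ∑ i, ∑ σ : Equiv.Perm ι, ∑ j, w σ * (d i * e j * (σ.permMatrix ℝ) i j) :=
              Finset.sum_congr rfl fun i _ => Finset.sum_comm
          _ = ∑ σ : Equiv.Perm ι, ∑ i, ∑ j, w σ * (d i * e j * (σ.permMatrix ℝ) i j) :=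
              Finset.sum_comm
          _ = ∑ σ : Equiv.Perm ι, w σ * ∑ i, d i * e (σ i) := by
              refine Finset.sum_congr rfl fun σ _ => ?_
              rw [← hperm σ, Finset.mul_sum]
              refine Finset.sum_congr rfl fun i _ => ?_
              rw [Finset.mul_sum]
    _ ≤ ∑ σ : Equiv.Perm ι, w σ * ∑ i, d i * e i := by
        refine Finset.sum_le_sum fun σ _ => ?_
        exact mul_le_mul_of_nonneg_left (hde.sum_mul_comp_perm_le_sum_mul) (hw0 σ)
    _ = ∑ i, d i * e i := by rw [← Finset.sum_mul, hw1, one_mul]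

lemma mono_unique {N : ℕ} {f g : Fin N → ℝ} (hf : Monotone f) (hg : Monotone g)
    (h : msetOf f = msetOf g) : f = g := by
  apply List.ofFn_injective
  refine List.Perm.eq_of_sortedLE (List.sortedLE_ofFn_iff.mpr hf)
    (List.sortedLE_ofFn_iff.mpr hg) ?_
  rw [← Multiset.coe_eq_coe, ← Fin.univ_val_map, ← Fin.univ_val_map]
  exact h

lemma exists_comp_eq {N : ℕ} (hcard : Fintype.card ι = N) (x : ι → ℝ) (d : Fin N → ℝ)
    (hd : Antitone d) (h : msetOf x = msetOf d) : ∃ φ : Fin N ≃ ι, x ∘ φ = d := by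
  classical
  let κ : ι ≃ Fin N := Fintype.equivFinOfCardEq hcard
  set x' : Fin N → ℝ := x ∘ κ.symm with hx'
  let π := Tuple.sort x'
  have hmono : Monotone (x' ∘ π) := Tuple.monotone_sort x'
  have hdm : Monotone (d ∘ Fin.revPerm) := by
    intro i j hij
    exact hd (by simpa using Fin.rev_le_rev.mpr hij)
  have hms : msetOf (x' ∘ π) = msetOf (d ∘ Fin.revPerm) := by
    rw [msetOf_comp_equiv x' π, msetOf_comp_equiv d Fin.revPerm, hx', msetOf_comp_equiv x κ.symm]
    exact h
  have heq : x' ∘ ⇑π = d ∘ ⇑Fin.revPerm := mono_unique hmono hdm hms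
  refine ⟨((Fin.revPerm : Equiv.Perm (Fin N)).trans π).trans κ.symm, ?_⟩
  funext k
  have := congrFun heq (Fin.revPerm k)
  simpa [hx'] using this

lemma ds_bound {N : ℕ} (hcard : Fintype.card ι = N) {S : Matrix ι ι ℝ}
    (hS : S ∈ doublyStochastic ℝ ι) (x y : ι → ℝ) (d e : Fin N → ℝ)
    (hd : Antitone d) (he : Antitone e) (hx : msetOf x = msetOf d) (hy : msetOf y = msetOf e) :
    ∑ i, ∑ j, x i * y j * S i j ≤ ∑ k, d k * e k := by
  obtain ⟨φ, hφ⟩ := exists_comp_eq hcard x d hd hx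
  obtain ⟨ψ, hψ⟩ := exists_comp_eq hcard y e he hy
  rw [mem_doublyStochastic_iff_sum] at hS
  obtain ⟨h0, hrow, hcol⟩ := hS
  set S' : Matrix (Fin N) (Fin N) ℝ := Matrix.of (fun k l => S (φ k) (ψ l)) with hS'
  have hS'mem : S' ∈ doublyStochastic ℝ (Fin N) := by
    rw [mem_doublyStochastic_iff_sum]
    refine ⟨fun k l => h0 _ _, fun k => ?_, fun l => ?_⟩
    · exact (Equiv.sum_comp ψ (fun j => S (φ k) j)).trans (hrow _)
    · exact (Equiv.sum_comp φ (fun i => S i (ψ l))).trans (hcol _)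
  have key : ∑ i, ∑ j, x i * y j * S i j = ∑ k, ∑ l, d k * e l * S' k l := by
    rw [← Equiv.sum_comp φ (fun i => ∑ j, x i * y j * S i j)]
    refine Finset.sum_congr rfl fun k _ => ?_
    rw [← Equiv.sum_comp ψ (fun j => x (φ k) * y j * S (φ k) j)]
    refine Finset.sum_congr rfl fun l _ => ?_
    rw [← hφ, ← hψ]
    rfl
  rw [key]
  have hmv : Monovary d e := by
    intro i j hij
    rcases le_total i j with h | h
    · exact absurd (he h) (not_le.mpr hij)
    · exact hd h
  exact ds_core hmv hS'mem


-- trace identity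
lemma trace_herm_eq (X Y : Matrix ι ι ℝ) (hX : X.IsHermitian) (hY : Y.IsHermitian) :
    ∃ W : Matrix ι ι ℝ, W ∈ Matrix.unitaryGroup ι ℝ ∧
      Matrix.trace (X * Y) = ∑ i, ∑ j, hX.eigenvalues i * hY.eigenvalues j * (W i j)^2 := by
  classical
  set U : Matrix ι ι ℝ := (hX.eigenvectorUnitary : Matrix ι ι ℝ) with hU
  set V : Matrix ι ι ℝ := (hY.eigenvectorUnitary : Matrix ι ι ℝ) with hV
  have hXs := hX.spectral_theorem
  have hYs := hY.spectral_theorem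
  set lam := hX.eigenvalues
  set mu := hY.eigenvalues
  have hofReal : (RCLike.ofReal : ℝ → ℝ) = id := by
    funext x; simp
  refine ⟨star U * V, ?_, ?_⟩
  · exact Submonoid.mul_mem _ (Unitary.star_mem hX.eigenvectorUnitary.2) hY.eigenvectorUnitary.2
  · have hXd : X = U * diagonal lam * star U := by
      rw [hXs]; congr 1
    have hYd : Y = V * diagonal mu * star V := by
      rw [hYs]; congr 1
    have step1 : Matrix.trace (X * Y)
        = Matrix.trace (diagonal lam * (star U * V) * diagonal mu * star (star U * V)) := by
      rw [hXd, hYd]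
      rw [Matrix.star_mul, star_star]
      simp only [mul_assoc]
      rw [Matrix.trace_mul_comm U]
      simp only [mul_assoc]
    rw [step1]
    set W := star U * V with hW
    have entry : ∀ i, (diagonal lam * W * diagonal mu * star W) i i
        = ∑ j, lam i * mu j * (W i j)^2 := by
      intro i
      rw [Matrix.mul_apply]
      refine Finset.sum_congr rfl fun j _ => ?_
      rw [Matrix.mul_diagonal, Matrix.diagonal_mul, Matrix.star_apply]
      simp only [star_trivial]
      ring
    rw [Matrix.trace]
    exact Finset.sum_congr rfl fun i _ => entry i

lemma sym_trace {N : ℕ} (hcard : Fintype.card ι = N) (X Y : Matrix ι ι ℝ)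
    (hX : X.IsHermitian) (hY : Y.IsHermitian) (d e : Fin N → ℝ)
    (hd : Antitone d) (he : Antitone e)
    (hXd : msetOf hX.eigenvalues = msetOf d) (hYe : msetOf hY.eigenvalues = msetOf e) :
    Matrix.trace (X * Y) ≤ ∑ k, d k * e k := by
  obtain ⟨W, hWu, htr⟩ := trace_herm_eq X Y hX hY
  rw [htr]
  have h1 : W * star W = 1 := Matrix.mem_unitaryGroup_iff.mp hWu
  have h2 : star W * W = 1 := Matrix.mem_unitaryGroup_iff'.mp hWu
  have hSmem : (Matrix.of fun i j => (W i j)^2) ∈ doublyStochastic ℝ ι := by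
    rw [mem_doublyStochastic_iff_sum]
    refine ⟨fun i j => sq_nonneg _, fun i => ?_, fun j => ?_⟩
    · have := congrFun (congrFun h1 i) i
      rw [Matrix.mul_apply] at this
      simp only [Matrix.star_apply, star_trivial, Matrix.one_apply_eq] at this
      rw [← this]
      exact Finset.sum_congr rfl fun j _ => by simp [Matrix.of_apply]; ring
    · have := congrFun (congrFun h2 j) j
      rw [Matrix.mul_apply] at this
      simp only [Matrix.star_apply, star_trivial, Matrix.one_apply_eq] at this
      rw [← this]
      exact Finset.sum_congr rfl fun i _ => by simp [Matrix.of_apply]; ring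
  refine le_trans (le_of_eq ?_) (ds_bound hcard hSmem hX.eigenvalues hY.eigenvalues d e hd he hXd hYe)
  simp [Matrix.of_apply]



lemma charpoly_eval (M : Matrix ι ι ℝ) (t : ℝ) :
    M.charpoly.eval t = (t • (1 : Matrix ι ι ℝ) - M).det := by
  unfold Matrix.charpoly
  rw [← Polynomial.coe_evalRingHom, RingHom.map_det]
  congr 1
  ext i j
  simp only [RingHom.mapMatrix_apply, Matrix.map_apply, Matrix.charmatrix_apply,
    Matrix.diagonal_apply, Matrix.sub_apply, Matrix.smul_apply, Matrix.one_apply,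
    coe_evalRingHom, eval_sub, eval_C, smul_eq_mul]
  split_ifs <;> simp

lemma herm_charpoly (P : Matrix ι ι ℝ) (hP : P.IsHermitian) :
    P.charpoly = ∏ i, (Polynomial.X - C (hP.eigenvalues i)) := by
  apply Polynomial.eq_of_infinite_eval_eq
  have : {x : ℝ | eval x P.charpoly = eval x (∏ i, (Polynomial.X - C (hP.eigenvalues i)))}
      = Set.univ := by
    apply Set.eq_univ_of_forall
    intro t
    show _ = _
    rw [charpoly_eval]
    set U : Matrix ι ι ℝ := (hP.eigenvectorUnitary : Matrix ι ι ℝ) with hU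
    set lam := hP.eigenvalues with hlam
    have hPd : P = U * diagonal lam * star U := by
      have := hP.spectral_theorem
      rw [this]; congr 1
    have hUs : U * star U = 1 := Matrix.mem_unitaryGroup_iff.mp hP.eigenvectorUnitary.2
    have h1 : t • (1 : Matrix ι ι ℝ) - P = U * (t • 1 - diagonal lam) * star U := by
      rw [Matrix.mul_sub, Matrix.sub_mul, hPd]
      congr 1
      rw [Matrix.mul_smul, Matrix.mul_one, Matrix.smul_mul, hUs]
    rw [h1, Matrix.det_mul, Matrix.det_mul]
    have hdet1 : U.det * (star U).det = 1 := by
      rw [← Matrix.det_mul, hUs, Matrix.det_one]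
    have h2 : t • (1 : Matrix ι ι ℝ) - diagonal lam = diagonal (fun i => t - lam i) := by
      rw [Matrix.smul_one_eq_diagonal, Matrix.diagonal_sub]
    rw [mul_comm U.det, mul_assoc, hdet1, mul_one, h2,
      Matrix.det_diagonal, eval_prod]
    refine Finset.prod_congr rfl fun i _ => ?_
    simp
  rw [this]
  exact Set.infinite_univ

lemma block_charpoly {n : ℕ} (A : Matrix (Fin n) (Fin n) ℝ) :
    (fromBlocks 0 A Aᵀ 0).charpoly
      = ∏ i, ((Polynomial.X - C (singVals A i)) * (Polynomial.X - C (- singVals A i))) := by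
  set lam := (show (Aᵀ * A).IsHermitian by simpa using Matrix.isHermitian_conjTranspose_mul_self A).eigenvalues with hlam
  have hpsd : (Aᵀ * A).PosSemidef := by
    have := Matrix.posSemidef_conjTranspose_mul_self A
    rwa [Matrix.conjTranspose_eq_transpose_of_trivial] at this
  have hlam0 : ∀ i, 0 ≤ lam i := fun i => hpsd.eigenvalues_nonneg i
  have hsq : ∀ i, (singVals A i)^2 = lam i := fun i => Real.sq_sqrt (hlam0 i)
  apply Polynomial.eq_of_infinite_eval_eq
  apply Set.Infinite.mono (s := {(0:ℝ)}ᶜ)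
  swap
  · exact Set.Finite.infinite_compl (Set.finite_singleton 0)
  intro t ht
  have ht0 : t ≠ 0 := ht
  show _ = _
  rw [charpoly_eval]
  have h1 : t • (1 : Matrix (Fin n ⊕ Fin n) (Fin n ⊕ Fin n) ℝ) - fromBlocks 0 A Aᵀ 0
      = fromBlocks (t • 1) (-A) (-Aᵀ) (t • 1) := by
    rw [← Matrix.fromBlocks_one, Matrix.fromBlocks_smul, sub_eq_add_neg,
      Matrix.fromBlocks_neg, Matrix.fromBlocks_add]
    congr 1 <;> simp
  rw [h1]
  letI hinv : Invertible (t • (1 : Matrix (Fin n) (Fin n) ℝ)) :=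
    ⟨t⁻¹ • 1, by rw [Matrix.smul_mul, Matrix.mul_smul, smul_smul, inv_mul_cancel₀ ht0,
        one_smul, Matrix.one_mul],
      by rw [Matrix.smul_mul, Matrix.mul_smul, smul_smul, mul_inv_cancel₀ ht0,
        one_smul, Matrix.one_mul]⟩
  rw [Matrix.det_fromBlocks₁₁]
  have hinvof : ⅟(t • (1 : Matrix (Fin n) (Fin n) ℝ)) = t⁻¹ • 1 := rfl
  have h2 : t • (1 : Matrix (Fin n) (Fin n) ℝ) - (-Aᵀ) * ⅟(t • (1 : Matrix (Fin n) (Fin n) ℝ)) * (-A)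
      = t • 1 - t⁻¹ • (Aᵀ * A) := by
    rw [hinvof]
    congr 1
    rw [Matrix.mul_smul, Matrix.mul_one, Matrix.smul_mul, neg_mul_neg]
  rw [h2]
  have h3 : (t • (1 : Matrix (Fin n) (Fin n) ℝ)).det
        * (t • (1 : Matrix (Fin n) (Fin n) ℝ) - t⁻¹ • (Aᵀ * A)).det
      = ((t * t) • (1 : Matrix (Fin n) (Fin n) ℝ) - Aᵀ * A).det := by
    have h4 : t • (t • (1 : Matrix (Fin n) (Fin n) ℝ) - t⁻¹ • (Aᵀ * A))
        = (t * t) • 1 - Aᵀ * A := by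
      rw [smul_sub, smul_smul, smul_smul, mul_inv_cancel₀ ht0, one_smul]
    rw [← h4, Matrix.det_smul, Matrix.det_smul, Matrix.det_one, mul_one, Fintype.card_fin]
  rw [h3]
  have h5 : ((t * t) • (1 : Matrix (Fin n) (Fin n) ℝ) - Aᵀ * A).det
      = ∏ i, (t * t - lam i) := by
    rw [← charpoly_eval,
      show (Aᵀ * A) = (Aᴴ * A) by rw [Matrix.conjTranspose_eq_transpose_of_trivial],
      herm_charpoly _ (Matrix.isHermitian_conjTranspose_mul_self A), eval_prod]
    refine Finset.prod_congr rfl fun i _ => ?_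
    simp
    rfl
  rw [h5, eval_prod]
  refine Finset.prod_congr rfl fun i _ => ?_
  have := hsq i
  simp only [eval_mul, eval_sub, eval_X, eval_C]
  nlinarith [hsq i]

lemma block_eigen {n : ℕ} (A : Matrix (Fin n) (Fin n) ℝ)
    (hAt : (fromBlocks 0 A Aᵀ 0).IsHermitian) :
    msetOf hAt.eigenvalues = msetOf (singVals A) + msetOf (fun i => - singVals A i) := by
  have key : (Multiset.map (fun a => Polynomial.X - C a) (msetOf hAt.eigenvalues)).prod
      = (Multiset.map (fun a => Polynomial.X - C a)
          (msetOf (singVals A) + msetOf (fun i => - singVals A i))).prod := by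
    rw [Multiset.map_add, Multiset.prod_add]
    unfold msetOf
    rw [Multiset.map_map, Multiset.map_map, Multiset.map_map]
    rw [← Finset.prod_eq_multiset_prod, ← Finset.prod_eq_multiset_prod,
      ← Finset.prod_eq_multiset_prod]
    simp only [Function.comp_def]
    rw [← herm_charpoly _ hAt, block_charpoly A, Finset.prod_mul_distrib]
  have h := congrArg Polynomial.roots key
  rwa [roots_multiset_prod_X_sub_C, roots_multiset_prod_X_sub_C] at h

lemma msetOf_sum {κ₁ κ₂ : Type*} [Fintype κ₁] [Fintype κ₂] (f : κ₁ ⊕ κ₂ → ℝ) :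
    msetOf f = msetOf (f ∘ Sum.inl) + msetOf (f ∘ Sum.inr) := by
  unfold msetOf
  rw [show (Finset.univ : Finset (κ₁ ⊕ κ₂)) = Finset.univ.disjSum Finset.univ from
    (Finset.univ_disjSum_univ).symm, Finset.val_disjSum, Multiset.disjSum,
    Multiset.map_add, Multiset.map_map, Multiset.map_map]

/-- extend `σ` on `Fin n` to `Fin (n+n)` by appending the negated reversal. -/
noncomputable def ext2 {n : ℕ} (σ : Fin n → ℝ) : Fin (n+n) → ℝ :=
  fun k => if h : (k : ℕ) < n then σ ⟨k, h⟩
    else -σ ⟨n + n - 1 - (k : ℕ), by have := k.isLt; omega⟩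

lemma ext2_anti {n : ℕ} {σ : Fin n → ℝ} (hm : Antitone σ) (h0 : ∀ i, 0 ≤ σ i) :
    Antitone (ext2 σ) := by
  intro k l hkl
  have hkl' : (k : ℕ) ≤ l := hkl
  have hkn := k.isLt
  have hln := l.isLt
  by_cases hk : (k : ℕ) < n <;> by_cases hl : (l : ℕ) < n
  · simp only [ext2, dif_pos hk, dif_pos hl]
    exact hm (show (⟨k, hk⟩ : Fin n) ≤ ⟨l, hl⟩ from hkl')
  · simp only [ext2, dif_pos hk, dif_neg hl]
    exact le_trans (neg_nonpos_of_nonneg (h0 _)) (h0 _)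
  · omega
  · simp only [ext2, dif_neg hk, dif_neg hl]
    apply neg_le_neg
    exact hm (show (⟨n + n - 1 - (l:ℕ), by omega⟩ : Fin n) ≤ ⟨n + n - 1 - (k:ℕ), by omega⟩
      from by simp only [Fin.mk_le_mk]; omega)

lemma ext2_inl {n : ℕ} (σ : Fin n → ℝ) (i : Fin n) :
    ext2 σ (finSumFinEquiv (Sum.inl i)) = σ i := by
  have h : ((finSumFinEquiv (Sum.inl i) : Fin (n+n)) : ℕ) = (i : ℕ) := by
    simp [finSumFinEquiv_apply_left]
  simp only [ext2, h, dif_pos i.isLt]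

lemma ext2_inr {n : ℕ} (σ : Fin n → ℝ) (i : Fin n) :
    ext2 σ (finSumFinEquiv (Sum.inr i)) = -σ (Fin.rev i) := by
  have h : ((finSumFinEquiv (Sum.inr i) : Fin (n+n)) : ℕ) = n + (i : ℕ) := by
    simp [finSumFinEquiv_apply_right]
    omega
  have hi := i.isLt
  simp only [ext2, h, dif_neg (by omega : ¬ n + (i:ℕ) < n)]
  congr 1
  congr 1
  apply Fin.ext
  rw [Fin.val_rev]
  show n + n - 1 - (n + (i : ℕ)) = n - ((i : ℕ) + 1)
  omega

lemma ext2_mset {n : ℕ} (σ : Fin n → ℝ) :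
    msetOf (ext2 σ) = msetOf σ + msetOf (fun i => -σ i) := by
  rw [← msetOf_comp_equiv (ext2 σ) finSumFinEquiv, msetOf_sum]
  congr 1
  · have h : (ext2 σ) ∘ ⇑finSumFinEquiv ∘ Sum.inl = σ := funext fun i => ext2_inl σ i
    rw [show (ext2 σ ∘ ⇑finSumFinEquiv) ∘ Sum.inl = (ext2 σ) ∘ ⇑finSumFinEquiv ∘ Sum.inl from rfl, h]
  · have h : (ext2 σ) ∘ ⇑finSumFinEquiv ∘ Sum.inr = (fun i => -σ i) ∘ ⇑(Fin.revPerm) :=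
      funext fun i => ext2_inr σ i
    rw [show (ext2 σ ∘ ⇑finSumFinEquiv) ∘ Sum.inr = (ext2 σ) ∘ ⇑finSumFinEquiv ∘ Sum.inr from rfl,
      h, msetOf_comp_equiv]

lemma ext2_sum {n : ℕ} (σ τ : Fin n → ℝ) :
    ∑ k, ext2 σ k * ext2 τ k = 2 * ∑ i, σ i * τ i := by
  rw [← Equiv.sum_comp finSumFinEquiv (fun k => ext2 σ k * ext2 τ k), Fintype.sum_sum_type]
  have h1 : ∑ i : Fin n, ext2 σ (finSumFinEquiv (Sum.inl i)) * ext2 τ (finSumFinEquiv (Sum.inl i))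
      = ∑ i, σ i * τ i :=
    Finset.sum_congr rfl fun i _ => by rw [ext2_inl, ext2_inl]
  have h2 : ∑ i : Fin n, ext2 σ (finSumFinEquiv (Sum.inr i)) * ext2 τ (finSumFinEquiv (Sum.inr i))
      = ∑ i, σ i * τ i := by
    rw [Finset.sum_congr rfl fun i _ => by rw [ext2_inr, ext2_inr, neg_mul_neg]]
    exact Equiv.sum_comp Fin.revPerm (fun i => σ i * τ i)
  rw [h1, h2]
  ring

/-- von Neumann trace inequality: `tr(A Bᵀ) ≤ ∑ σ_i(A) σ_i(B)` with singular values
ordered nonincreasingly. -/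
theorem stmt2 {n : ℕ} (A B : Matrix (Fin n) (Fin n) ℝ)
    (σA σB : Fin n → ℝ) (eA eB : Equiv.Perm (Fin n))
    (hA : ∀ i, σA i = singVals A (eA i)) (hB : ∀ i, σB i = singVals B (eB i))
    (hAm : Antitone σA) (hBm : Antitone σB) :
    Matrix.trace (A * Bᵀ) ≤ ∑ i, σA i * σB i := by
  classical
  have hAt : (fromBlocks 0 A Aᵀ 0).IsHermitian := by
    show (fromBlocks 0 A Aᵀ 0)ᴴ = fromBlocks 0 A Aᵀ 0
    rw [Matrix.fromBlocks_conjTranspose]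
    simp [Matrix.conjTranspose_eq_transpose_of_trivial]
  have hBt : (fromBlocks 0 B Bᵀ 0).IsHermitian := by
    show (fromBlocks 0 B Bᵀ 0)ᴴ = fromBlocks 0 B Bᵀ 0
    rw [Matrix.fromBlocks_conjTranspose]
    simp [Matrix.conjTranspose_eq_transpose_of_trivial]
  have hσA0 : ∀ i, 0 ≤ σA i := fun i => (hA i) ▸ Real.sqrt_nonneg _
  have hσB0 : ∀ i, 0 ≤ σB i := fun i => (hB i) ▸ Real.sqrt_nonneg _
  have hcard : Fintype.card (Fin n ⊕ Fin n) = n + n := by simp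
  have msA : msetOf hAt.eigenvalues = msetOf (ext2 σA) := by
    rw [block_eigen A hAt, ext2_mset]
    congr 1
    · have h : σA = singVals A ∘ ⇑eA := funext hA
      rw [h, msetOf_comp_equiv]
    · have h : (fun i => -σA i) = (fun i => -singVals A i) ∘ ⇑eA :=
        funext fun i => by simp [hA i]
      rw [h, msetOf_comp_equiv]
  have msB : msetOf hBt.eigenvalues = msetOf (ext2 σB) := by
    rw [block_eigen B hBt, ext2_mset]
    congr 1
    · have h : σB = singVals B ∘ ⇑eB := funext hB
      rw [h, msetOf_comp_equiv]
    · have h : (fun i => -σB i) = (fun i => -singVals B i) ∘ ⇑eB :=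
        funext fun i => by simp [hB i]
      rw [h, msetOf_comp_equiv]
  have key := sym_trace hcard (fromBlocks 0 A Aᵀ 0) (fromBlocks 0 B Bᵀ 0) hAt hBt
    (ext2 σA) (ext2 σB) (ext2_anti hAm hσA0) (ext2_anti hBm hσB0) msA msB
  have htb : ∀ (P Q R S : Matrix (Fin n) (Fin n) ℝ),
      Matrix.trace (fromBlocks P Q R S) = Matrix.trace P + Matrix.trace S := by
    intro P Q R S
    simp [Matrix.trace, Fintype.sum_sum_type]
  have htr : Matrix.trace (fromBlocks 0 A Aᵀ 0 * fromBlocks 0 B Bᵀ 0)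
      = 2 * Matrix.trace (A * Bᵀ) := by
    rw [Matrix.fromBlocks_multiply, htb]
    have h1 : Matrix.trace (Aᵀ * B) = Matrix.trace (A * Bᵀ) := by
      rw [← Matrix.trace_transpose (Aᵀ * B), Matrix.transpose_mul,
        Matrix.transpose_transpose, Matrix.trace_mul_comm]
    simp only [Matrix.zero_mul, Matrix.mul_zero, add_zero, zero_add]
    rw [h1]
    ring
  rw [htr] at key
  rw [ext2_sum] at key
  linarith
end

section
/- Let X ~ χ²(d) be a chi-squared random variable with d degrees of freedom. Then for any δ ∈ (0,1), with ζ(δ)² = d + 2√(−d ln δ) − 2 ln δ, we have P[X ≤ ζ(δ)²] ≥ 1 − δ. -/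
open MeasureTheory ProbabilityTheory

section LMHelpers
open Real

lemma LM_log_ineq {x : ℝ} (hx0 : 0 ≤ x) (hx1 : x < 1) :
    -Real.log (1 - x) ≤ x + x^2/(2*(1-x)) := by
  have h1 : HasSum (fun n : ℕ => x ^ (n+1) / (n+1)) (-Real.log (1-x)) :=
    Real.hasSum_pow_div_log_of_abs_lt_one (by rwa [abs_of_nonneg hx0])
  have h2 : HasSum (fun n : ℕ => x ^ (n+1) / 2) (x / (2*(1-x))) := by
    have h := (hasSum_geometric_of_lt_one hx0 hx1).mul_left (x/2)
    have he : (fun n : ℕ => x/2 * x^n) = fun n : ℕ => x ^ (n+1) / 2 := by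
      funext n; rw [pow_succ]; ring
    rw [he] at h
    convert h using 1
    have h1x : (1:ℝ) - x ≠ 0 := by linarith
    exacts [rfl, by rw [← div_eq_mul_inv, div_div]]
  have h3 : HasSum (fun n : ℕ => if n = 0 then x/2 else 0) (x/2) := hasSum_ite_eq 0 (x/2)
  have h4 := h2.add h3
  have hle : ∀ n : ℕ, x ^ (n+1) / (n+1) ≤ x ^ (n+1) / 2 + (if n = 0 then x/2 else 0) := by
    intro n
    rcases Nat.eq_zero_or_pos n with hn | hn
    · subst hn; norm_num
    · simp only [Nat.pos_iff_ne_zero.mp hn, if_neg (Nat.pos_iff_ne_zero.mp hn)]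
      have h2n : (2:ℝ) ≤ (n:ℝ) + 1 := by exact_mod_cast Nat.succ_le_succ hn
      have := div_le_div_of_nonneg_left (pow_nonneg hx0 (n+1)) (by norm_num : (0:ℝ) < 2) h2n
      push_cast at this ⊢
      linarith
  have := hasSum_le hle h1 h4
  calc -Real.log (1-x) ≤ x / (2*(1-x)) + x/2 := this
    _ = x + x^2/(2*(1-x)) := by
        have h1x : (1:ℝ) - x ≠ 0 := by linarith
        field_simp; ring

lemma LM_gauss_withDensity : gaussianReal 0 1 =
    volume.withDensity (fun x => ((gaussianPDFReal 0 1 x).toNNReal : ENNReal)) := by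
  rw [gaussianReal_of_var_ne_zero 0 one_ne_zero]
  rfl

lemma LM_smul_eq {l : ℝ} :
    (fun x : ℝ => (gaussianPDFReal 0 1 x).toNNReal • Real.exp (l * x^2)) =
      fun x : ℝ => (Real.sqrt (2 * π))⁻¹ * Real.exp (-(1/2 - l) * x^2) := by
  funext x
  rw [NNReal.smul_def, Real.coe_toNNReal _ (gaussianPDFReal_nonneg 0 1 x)]
  simp only [gaussianPDFReal, NNReal.coe_one, mul_one, sub_zero, smul_eq_mul]
  rw [mul_assoc, ← Real.exp_add]
  congr 2 <;> ring

lemma LM_integrable_gauss {l : ℝ} (hl : l < 1/2) :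
    Integrable (fun x => Real.exp (l * x^2)) (gaussianReal 0 1) := by
  rw [LM_gauss_withDensity,
    integrable_withDensity_iff_integrable_smul (measurable_gaussianPDFReal 0 1).real_toNNReal,
    LM_smul_eq]
  exact (integrable_exp_neg_mul_sq (by linarith)).const_mul _

lemma LM_integral_gauss {l : ℝ} (hl : l < 1/2) :
    ∫ x, Real.exp (l * x^2) ∂(gaussianReal 0 1) = (Real.sqrt (1 - 2*l))⁻¹ := by
  rw [LM_gauss_withDensity,
    integral_withDensity_eq_integral_smul (measurable_gaussianPDFReal 0 1).real_toNNReal,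
    LM_smul_eq, integral_const_mul, integral_gaussian]
  rw [← Real.sqrt_inv, ← Real.sqrt_inv, ← Real.sqrt_mul (by positivity)]
  congr 1
  have hb : (0:ℝ) < 1/2 - l := by linarith
  have h2 : (1:ℝ) - 2*l ≠ 0 := by linarith
  have hπ : π ≠ 0 := Real.pi_ne_zero
  field_simp
end LMHelpers

/-- Laurent–Massart bound for a chi-squared random variable with d degrees of freedom
(realized as the sum of squares of d i.i.d. standard normals):
`P[X ≤ ζ(δ)²] ≥ 1 − δ` where `ζ(δ)² = d + 2√(−d ln δ) − 2 ln δ`. -/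
theorem stmt15 {Ω : Type*} [MeasurableSpace Ω] (μ : Measure Ω) [IsProbabilityMeasure μ]
    (d : ℕ) (X : Fin d → Ω → ℝ)
    (hmeas : ∀ i, Measurable (X i))
    (hindep : iIndepFun X μ)
    (hdist : ∀ i, μ.map (X i) = gaussianReal 0 1)
    (δ : ℝ) (hδ : δ ∈ Set.Ioo (0 : ℝ) 1) :
    1 - ENNReal.ofReal δ ≤
      μ {ω | ∑ i, (X i ω)^2 ≤
        (d : ℝ) + 2 * Real.sqrt (-(d : ℝ) * Real.log δ) - 2 * Real.log δ} := by
  obtain ⟨hδ0, hδ1⟩ := hδ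
  have hlogδ : Real.log δ < 0 := Real.log_neg hδ0 hδ1
  set t : ℝ := -Real.log δ with ht_def
  have ht : 0 < t := by simp [ht_def]; linarith
  rcases Nat.eq_zero_or_pos d with hd0 | hdpos
  · subst hd0
    have hset : {ω : Ω | ∑ i : Fin 0, (X i ω)^2 ≤
        (0 : ℝ) + 2 * Real.sqrt (-(0 : ℝ) * Real.log δ) - 2 * Real.log δ} = Set.univ := by
      ext ω
      simp only [Finset.univ_eq_empty, Finset.sum_empty, Set.mem_setOf_eq, Set.mem_univ,
        iff_true, Nat.cast_zero, neg_zero, zero_mul, Real.sqrt_zero, mul_zero]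
      linarith
    simp only [Nat.cast_zero] at hset ⊢
    rw [hset, measure_univ]
    exact tsub_le_self
  -- main case
  set p : ℝ := Real.sqrt d with hp_def
  set q : ℝ := Real.sqrt t with hq_def
  have hp : 0 < p := Real.sqrt_pos.mpr (by exact_mod_cast hdpos)
  have hq : 0 < q := Real.sqrt_pos.mpr ht
  have hp2 : p^2 = (d:ℝ) := Real.sq_sqrt (Nat.cast_nonneg d)
  have hq2 : q^2 = t := Real.sq_sqrt ht.le
  set l : ℝ := q / (p + 2*q) with hl_def
  have hpq2 : 0 < p + 2*q := by linarith
  have hl0 : 0 < l := div_pos hq hpq2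
  have hl : l < 1/2 := by
    rw [hl_def, div_lt_iff₀ hpq2]; linarith
  have hb : 0 < 1 - 2*l := by linarith
  set a : ℝ := (d:ℝ) + 2 * (p*q) + 2*t with ha_def
  have hthr : (d : ℝ) + 2 * Real.sqrt (-(d : ℝ) * Real.log δ) - 2 * Real.log δ = a := by
    rw [show -(d : ℝ) * Real.log δ = (d:ℝ) * t by rw [ht_def]; ring,
      Real.sqrt_mul (Nat.cast_nonneg d), ← hp_def, ← hq_def, ha_def, ht_def]
    ring
  set Y : Fin d → Ω → ℝ := fun i ω => (X i ω)^2 with hY_def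
  have hYmeas : ∀ i, Measurable (Y i) := fun i => (hmeas i).pow_const 2
  have hYindep : iIndepFun Y μ :=
    hindep.comp (fun _ x => x^2) (fun _ => measurable_id.pow_const 2)
  have hcont : Continuous fun x : ℝ => Real.exp (l * x^2) := by continuity
  have h_int : ∀ i, Integrable (fun ω => Real.exp (l * Y i ω)) μ := by
    intro i
    have h1 : Integrable (fun x => Real.exp (l * x^2)) (μ.map (X i)) := by
      rw [hdist i]; exact LM_integrable_gauss hl
    exact (integrable_map_measure hcont.aestronglyMeasurable (hmeas i).aemeasurable).mp h1
  have hmgf : ∀ i, mgf (Y i) μ l = (Real.sqrt (1 - 2*l))⁻¹ := by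
    intro i
    rw [mgf, ← LM_integral_gauss hl, ← hdist i,
      integral_map (hmeas i).aemeasurable hcont.aestronglyMeasurable]
  have hch := measure_ge_le_exp_mul_mgf (μ := μ) (X := ∑ i, Y i) a hl0.le
    (hYindep.integrable_exp_mul_sum hYmeas (fun i _ => h_int i))
  rw [hYindep.mgf_sum hYmeas Finset.univ] at hch
  simp only [hmgf, Finset.prod_const, Finset.card_univ, Fintype.card_fin] at hch
  -- numeric bound
  have hsqrt_exp : (Real.sqrt (1 - 2*l))⁻¹ = Real.exp (-(Real.log (1-2*l)/2)) := by
    rw [Real.sqrt_eq_rpow, Real.rpow_def_of_pos hb, Real.exp_neg]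
    ring_nf
  have key : (d:ℝ)*l + (d:ℝ)*l^2/(1-2*l) = l*a - t := by
    rw [← hp2, ← hq2, ha_def, hl_def, ← hp2, ← hq2]
    have hpne : p + 2*q ≠ 0 := ne_of_gt hpq2
    have hbne : 1 - 2*(q/(p+2*q)) ≠ 0 := by
      rw [← hl_def]; exact ne_of_gt hb
    have hp0 : p ≠ 0 := ne_of_gt hp
    field_simp
    ring_nf
    field_simp
    ring
  have hlog := LM_log_ineq (x := 2*l) (by linarith) (by linarith)
  have h5 : (d:ℝ) * (-(Real.log (1-2*l)/2)) ≤ (d:ℝ)*l + (d:ℝ)*l^2/(1-2*l) := by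
    have hd0 : (0:ℝ) ≤ (d:ℝ)/2 := by positivity
    have h6 := mul_le_mul_of_nonneg_left hlog hd0
    have he : (d:ℝ)/2*(2*l + (2*l)^2/(2*(1-2*l))) = (d:ℝ)*l + (d:ℝ)*l^2/(1-2*l) := by
      field_simp
    rw [he] at h6
    linarith
  have hbound : Real.exp (-l * a) * ((Real.sqrt (1 - 2*l))⁻¹)^d ≤ δ := by
    rw [hsqrt_exp, ← Real.exp_nat_mul, ← Real.exp_add]
    calc Real.exp (-l*a + d * (-(Real.log (1-2*l)/2)))
        ≤ Real.exp (-t) := by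
          apply Real.exp_le_exp.mpr
          linarith
      _ = δ := by rw [ht_def, neg_neg, Real.exp_log hδ0]
  have hfin : (μ {ω | a ≤ (∑ i, Y i) ω}).toReal ≤ δ := hch.trans hbound
  have hA : μ {ω | a ≤ (∑ i, Y i) ω} ≤ ENNReal.ofReal δ :=
    (ENNReal.le_ofReal_iff_toReal_le (measure_ne_top μ _) hδ0.le).mpr hfin
  rw [hthr]
  have hSmeas : Measurable fun ω => ∑ i, (X i ω)^2 :=
    Finset.measurable_sum _ (fun i _ => hYmeas i)
  have hsub : {ω | ∑ i, (X i ω)^2 ≤ a}ᶜ ⊆ {ω | a ≤ (∑ i, Y i) ω} := by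
    intro ω hω
    simp only [Set.mem_compl_iff, Set.mem_setOf_eq, not_le] at hω
    simp only [Set.mem_setOf_eq, Finset.sum_apply]
    exact le_of_lt hω
  have hcompl : μ {ω | ∑ i, (X i ω)^2 ≤ a}ᶜ ≤ ENNReal.ofReal δ :=
    le_trans (measure_mono hsub) hA
  rw [tsub_le_iff_right]
  calc (1:ENNReal) = μ {ω | ∑ i, (X i ω)^2 ≤ a} + μ {ω | ∑ i, (X i ω)^2 ≤ a}ᶜ := by
        rw [measure_add_measure_compl (measurableSet_le hSmeas measurable_const)]; exact measure_univ.symm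
    _ ≤ μ {ω | ∑ i, (X i ω)^2 ≤ a} + ENNReal.ofReal δ := by
        exact add_le_add_right hcompl _
end
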